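/- A ring R is right SSP (the sum of any two direct summands of R_R is a direct summand of R_R) if and only if for any two idempotents e and f of R, efR is a direct summand of R_R. -/

import Mathlib

def IsSummand {R M : Type*} [Ring R] [AddCommGroup M] [Module R M]
    (p : Submodule R M) : Prop :=
  ∃ q : Submodule R M, IsCompl p q

section Aux

variable {R : Type*} [Ring R]

private lemma mem_sp {e x : R} :
    x ∈ Submodule.span Rᵐᵒᵖ ({e} : Set R) ↔ ∃ r : R, x = e * r := by
  rw [Submodule.mem_span_singleton]
  constructor
  · rintro ⟨a, rfl⟩
    exact ⟨a.unop, (MulOpposite.smul_eq_mul_unop _ _).symm⟩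
  · rintro ⟨r, rfl⟩
    exact ⟨MulOpposite.op r, by simp [MulOpposite.smul_eq_mul_unop]⟩

private lemma sp_le {e : R} {p : Submodule Rᵐᵒᵖ R} (h : e ∈ p) :
    Submodule.span Rᵐᵒᵖ ({e} : Set R) ≤ p :=
  (Submodule.span_singleton_le_iff_mem e p).mpr h

private lemma mul_mem_sp (e r : R) : e * r ∈ Submodule.span Rᵐᵒᵖ ({e} : Set R) :=
  mem_sp.mpr ⟨r, rfl⟩

private lemma self_mem_sp (e : R) : e ∈ Submodule.span Rᵐᵒᵖ ({e} : Set R) :=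
  Submodule.mem_span_singleton_self e

/-- The span of an idempotent is a direct summand, with complement the span of `1 - e`. -/
private lemma idem_compl {e : R} (he : IsIdempotentElem e) :
    IsCompl (Submodule.span Rᵐᵒᵖ ({e} : Set R)) (Submodule.span Rᵐᵒᵖ ({1 - e} : Set R)) := by
  constructor
  · rw [Submodule.disjoint_def]
    intro x hx hx'
    obtain ⟨r, rfl⟩ := mem_sp.mp hx
    obtain ⟨s, hs⟩ := mem_sp.mp hx'
    have : e * (e * r) = e * ((1 - e) * s) := by rw [← hs]
    rw [← mul_assoc, ← mul_assoc, he, mul_sub, mul_one, he, sub_self, zero_mul] at this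
    rw [this] at hs ⊢
  · rw [codisjoint_iff, eq_top_iff]
    intro x _
    rw [Submodule.mem_sup]
    exact ⟨e * x, mul_mem_sp e x, (1 - e) * x, mul_mem_sp (1 - e) x,
      by rw [sub_mul, one_mul]; abel⟩

/-- Every direct summand of `R` as a right module is generated by an idempotent. -/
private lemma summand_exists_idem {p : Submodule Rᵐᵒᵖ R} (hp : IsSummand p) :
    ∃ e : R, IsIdempotentElem e ∧ p = Submodule.span Rᵐᵒᵖ ({e} : Set R) := by
  obtain ⟨q, hq⟩ := hp
  have h1 : (1 : R) ∈ p ⊔ q := by rw [codisjoint_iff.mp hq.codisjoint]; trivial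
  rw [Submodule.mem_sup] at h1
  obtain ⟨e, he, f, hf, hef⟩ := h1
  have key : ∀ x ∈ p, x = e * x := by
    intro x hx
    have hex : e * x ∈ p := by
      have h1 : e * x = (MulOpposite.op x) • e := (MulOpposite.smul_eq_mul_unop _ _).symm
      rw [h1]; exact p.smul_mem _ he
    have hfx : f * x ∈ q := by
      have h1 : f * x = (MulOpposite.op x) • f := (MulOpposite.smul_eq_mul_unop _ _).symm
      rw [h1]; exact q.smul_mem _ hf
    have hsum : x = e * x + f * x := by
      rw [← add_mul, hef, one_mul]
    have hmem : x - e * x ∈ p := p.sub_mem hx hex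
    have hmem' : x - e * x ∈ q := by
      rw [sub_eq_of_eq_add' hsum]; exact hfx
    have h0 : x - e * x = 0 := (Submodule.disjoint_def.mp hq.disjoint) _ hmem hmem'
    exact sub_eq_zero.mp h0
  refine ⟨e, ?_, ?_⟩
  · exact (key e he).symm
  · refine le_antisymm ?_ (sp_le he)
    intro x hx
    rw [key x hx]
    exact mul_mem_sp e x

end Aux

/-- `R` is right SSP iff for all idempotents `e, f` of `R`, the right ideal `efR`
is a direct summand of `R_R`. -/
theorem stmt3 {R : Type*} [Ring R] :
    (∀ p q : Submodule Rᵐᵒᵖ R, IsSummand p → IsSummand q → IsSummand (p ⊔ q)) ↔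
    (∀ e f : R, IsIdempotentElem e → IsIdempotentElem f →
      IsSummand (Submodule.span Rᵐᵒᵖ {e * f})) := by
  constructor
  · -- SSP → efR is a summand
    intro ssp e f he hf
    obtain ⟨D, hD⟩ := ssp _ _ ⟨_, idem_compl hf⟩ ⟨_, idem_compl he.one_sub⟩
    -- hD : IsCompl (span {f} ⊔ span {1 - e}) D
    have hkey : Submodule.span Rᵐᵒᵖ ({e * f} : Set R) ⊔ Submodule.span Rᵐᵒᵖ ({1 - e} : Set R)
        = Submodule.span Rᵐᵒᵖ ({f} : Set R) ⊔ Submodule.span Rᵐᵒᵖ ({1 - e} : Set R) := by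
      apply le_antisymm
      · refine sup_le (sp_le ?_) le_sup_right
        rw [Submodule.mem_sup]
        refine ⟨f, self_mem_sp f, (1 - e) * (-f), mul_mem_sp _ _, ?_⟩
        rw [mul_neg, sub_mul, one_mul]; abel
      · refine sup_le (sp_le ?_) le_sup_right
        rw [Submodule.mem_sup]
        refine ⟨e * f, self_mem_sp _, (1 - e) * f, mul_mem_sp _ _, ?_⟩
        rw [sub_mul, one_mul]; abel
    have hle : Submodule.span Rᵐᵒᵖ ({e * f} : Set R)
        ≤ Submodule.span Rᵐᵒᵖ ({f} : Set R) ⊔ Submodule.span Rᵐᵒᵖ ({1 - e} : Set R) := by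
      rw [← hkey]; exact le_sup_left
    refine ⟨Submodule.span Rᵐᵒᵖ ({1 - e} : Set R) ⊔ D, ?_, ?_⟩
    · -- disjointness
      rw [Submodule.disjoint_def]
      intro x hx hx'
      obtain ⟨r, rfl⟩ := mem_sp.mp hx
      rw [Submodule.mem_sup] at hx'
      obtain ⟨a, ha, d, hd, hadd⟩ := hx'
      have hdS : d ∈ Submodule.span Rᵐᵒᵖ ({f} : Set R) ⊔ Submodule.span Rᵐᵒᵖ ({1 - e} : Set R) := by
        have hxS : e * f * r ∈ _ := hle (mul_mem_sp (e * f) r)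
        have haS : a ∈ Submodule.span Rᵐᵒᵖ ({f} : Set R) ⊔ Submodule.span Rᵐᵒᵖ ({1 - e} : Set R) :=
          Submodule.mem_sup_right ha
        have : d = e * f * r - a := by rw [← hadd]; abel
        rw [this]
        exact Submodule.sub_mem _ hxS haS
      have hd0 : d = 0 := (Submodule.disjoint_def.mp hD.disjoint) d hdS hd
      rw [hd0, add_zero] at hadd
      obtain ⟨s, hs⟩ := mem_sp.mp ha
      have h2 : e * (e * f * r) = e * ((1 - e) * s) := by rw [← hadd, hs]
      rw [← mul_assoc, ← mul_assoc, ← mul_assoc, he, mul_sub, mul_one, he, sub_self,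
        zero_mul] at h2
      exact h2
    · -- codisjointness
      rw [codisjoint_iff, ← sup_assoc, hkey]
      exact codisjoint_iff.mp hD.codisjoint
  · -- efR summand for all idempotents → SSP
    intro hyp p q hp hq
    obtain ⟨e, he, rfl⟩ := summand_exists_idem hp
    obtain ⟨f, hf, rfl⟩ := summand_exists_idem hq
    obtain ⟨g, hg, hsp⟩ := summand_exists_idem (hyp (1 - e) f he.one_sub hf)
    -- hsp : span {(1-e) * f} = span {g}
    have heg : e * g = 0 := by
      have : g ∈ Submodule.span Rᵐᵒᵖ ({(1 - e) * f} : Set R) := hsp ▸ self_mem_sp g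
      obtain ⟨r, rfl⟩ := mem_sp.mp this
      rw [← mul_assoc, ← mul_assoc, mul_sub, mul_one, he, sub_self, zero_mul, zero_mul]
    have h1g : (1 - e) * g = g := by rw [sub_mul, one_mul, heg, sub_zero]
    set h := g * (1 - e) with hdef
    have hh : IsIdempotentElem h := by
      show g * (1 - e) * (g * (1 - e)) = g * (1 - e)
      rw [mul_assoc g (1 - e), ← mul_assoc (1 - e), h1g, ← mul_assoc, hg]
    have hgh : g = h * g := by rw [hdef, mul_assoc, h1g, hg]
    have heh : e * h = 0 := by rw [hdef, ← mul_assoc, heg, zero_mul]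
    have hhe : h * e = 0 := by
      rw [hdef, mul_assoc, sub_mul, one_mul, he, sub_self, mul_zero]
    have hk : IsIdempotentElem (e + h) := by
      show (e + h) * (e + h) = e + h
      rw [add_mul, mul_add, mul_add, he, hh, heh, hhe, add_zero, zero_add]
    have claim : Submodule.span Rᵐᵒᵖ ({e} : Set R) ⊔ Submodule.span Rᵐᵒᵖ ({f} : Set R)
        = Submodule.span Rᵐᵒᵖ ({e + h} : Set R) := by
      have step1 : Submodule.span Rᵐᵒᵖ ({e} : Set R) ⊔ Submodule.span Rᵐᵒᵖ ({f} : Set R)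
          = Submodule.span Rᵐᵒᵖ ({e} : Set R) ⊔ Submodule.span Rᵐᵒᵖ ({(1 - e) * f} : Set R) := by
        apply le_antisymm
        · refine sup_le le_sup_left (sp_le ?_)
          rw [Submodule.mem_sup]
          refine ⟨e * f, mul_mem_sp _ _, (1 - e) * f, self_mem_sp _, ?_⟩
          rw [sub_mul, one_mul]; abel
        · refine sup_le le_sup_left (sp_le ?_)
          rw [Submodule.mem_sup]
          refine ⟨e * (-f), mul_mem_sp _ _, f, self_mem_sp _, ?_⟩
          rw [mul_neg, sub_mul, one_mul]; abel
      rw [step1, hsp]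
      have step2 : Submodule.span Rᵐᵒᵖ ({g} : Set R) = Submodule.span Rᵐᵒᵖ ({h} : Set R) := by
        apply le_antisymm
        · exact sp_le (by rw [hgh]; exact mul_mem_sp h g)
        · exact sp_le (by rw [hdef]; exact mul_mem_sp g (1 - e))
      rw [step2]
      apply le_antisymm
      · refine sup_le (sp_le ?_) (sp_le ?_)
        · exact mem_sp.mpr ⟨e, by rw [add_mul, he, hhe, add_zero]⟩
        · exact mem_sp.mpr ⟨h, by rw [add_mul, heh, hh, zero_add]⟩
      · refine sp_le ?_
        exact Submodule.add_mem _ (Submodule.mem_sup_left (self_mem_sp e))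
          (Submodule.mem_sup_right (self_mem_sp h))
    rw [claim]
    exact ⟨_, idem_compl hk⟩
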